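/- For any real numbers α₁ ≥ α₂, β₁ ≥ β₂, and any γ₁ ≥ γ₂ with γ₁ + γ₂ = α₁ + α₂ + β₁ + β₂ and |（α₁−α₂）−（β₁−β₂）| ≤ γ₁ − γ₂ ≤ (α₁−α₂)+(β₁−β₂), there exist 2×2 Hermitian matrices A with eigenvalues α₁, α₂ and B with eigenvalues β₁, β₂ such that A + B has eigenvalues γ₁, γ₂. -/

import Mathlib

open Matrix

/-- `A` (Hermitian, with diagonalization witness `hA`) has eigenvalues given by the tuple `a`,
up to a permutation. -/
def eigsEq {n : ℕ} {A : Matrix (Fin n) (Fin n) ℂ} (hA : A.IsHermitian) (a : Fin n → ℝ) : Prop :=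
  ∃ σ : Equiv.Perm (Fin n), ∀ i, hA.eigenvalues (σ i) = a i


lemma trace_eq_sum_eigs {A : Matrix (Fin 2) (Fin 2) ℂ} (hA : A.IsHermitian) :
    A.trace = ∑ i, (hA.eigenvalues i : ℂ) := by
  conv_lhs => rw [hA.spectral_theorem, Unitary.conjStarAlgAut_apply]
  rw [Matrix.trace_mul_cycle,
    (Matrix.mem_unitaryGroup_iff').mp (hA.eigenvectorUnitary).2, Matrix.one_mul,
    Matrix.trace_diagonal]
  rfl

lemma det_eq_prod_eigs {A : Matrix (Fin 2) (Fin 2) ℂ} (hA : A.IsHermitian) :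
    A.det = ∏ i, (hA.eigenvalues i : ℂ) := hA.det_eq_prod_eigenvalues

lemma eigs2 {A : Matrix (Fin 2) (Fin 2) ℂ} (hA : A.IsHermitian) (l₁ l₂ : ℝ)
    (htr : A.trace = (l₁ : ℂ) + l₂) (hdet : A.det = (l₁ : ℂ) * l₂) :
    eigsEq hA ![l₁, l₂] := by
  have hs : hA.eigenvalues 0 + hA.eigenvalues 1 = l₁ + l₂ := by
    have := trace_eq_sum_eigs hA
    rw [htr, Fin.sum_univ_two] at this
    exact_mod_cast this.symm
  have hp : hA.eigenvalues 0 * hA.eigenvalues 1 = l₁ * l₂ := by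
    have := det_eq_prod_eigs hA
    rw [hdet, Fin.prod_univ_two] at this
    exact_mod_cast this.symm
  have hz : (hA.eigenvalues 0 - l₁) * (hA.eigenvalues 0 - l₂) = 0 := by
    linear_combination hA.eigenvalues 0 * hs - hp
  rcases mul_eq_zero.mp hz with h | h
  · refine ⟨Equiv.refl _, ?_⟩
    intro i
    fin_cases i
    · simpa using by linarith
    · simp only [Equiv.refl_apply]
      have : hA.eigenvalues 1 = l₂ := by linarith
      simpa using this
  · refine ⟨Equiv.swap 0 1, ?_⟩
    intro i
    fin_cases i
    · simp only [Equiv.swap_apply_left]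
      have : hA.eigenvalues 1 = l₁ := by linarith
      simpa using this
    · simp only [Equiv.swap_apply_right]
      have : hA.eigenvalues 0 = l₂ := by linarith
      simpa using this

lemma herm2 (a b c : ℝ) : (!![(a:ℂ), (b:ℂ); (b:ℂ), (c:ℂ)]).IsHermitian := by
  unfold Matrix.IsHermitian
  ext i j
  fin_cases i <;> fin_cases j <;> simp [Matrix.conjTranspose_apply]

lemma key (α₁ α₂ β₁ β₂ γ₁ γ₂ p q : ℝ)
    (hBe : p * (β₁ + β₂ - p) - q ^ 2 = β₁ * β₂)
    (hDe : (α₁ + p) * (α₂ + β₁ + β₂ - p) - q ^ 2 = γ₁ * γ₂)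
    (htr : γ₁ + γ₂ = α₁ + α₂ + β₁ + β₂) :
    ∃ (A B : Matrix (Fin 2) (Fin 2) ℂ) (hA : A.IsHermitian) (hB : B.IsHermitian),
      eigsEq hA ![α₁, α₂] ∧ eigsEq hB ![β₁, β₂] ∧ eigsEq (hA.add hB) ![γ₁, γ₂] := by
  set r : ℝ := β₁ + β₂ - p with hr
  refine ⟨!![(α₁:ℂ), 0; 0, (α₂:ℂ)], !![(p:ℂ), (q:ℂ); (q:ℂ), (r:ℂ)], ?_, herm2 p q r, ?_, ?_, ?_⟩
  · have := herm2 α₁ 0 α₂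
    simpa using this
  · apply eigs2
    · simp [Matrix.trace_fin_two_of]
    · simp [Matrix.det_fin_two_of]
  · apply eigs2
    · simp [Matrix.trace_fin_two_of]
      have hre : p + r = β₁ + β₂ := by rw [hr]; ring
      have := congrArg (Complex.ofReal) hre
      push_cast at this
      linear_combination this
    · rw [Matrix.det_fin_two_of]
      have hre : p * r - q * q = β₁ * β₂ := by linear_combination hBe
      have := congrArg (Complex.ofReal) hre
      push_cast at this
      linear_combination this
  · apply eigs2
    · rw [Matrix.trace_fin_two]
      simp [Matrix.add_apply]
      have hre : α₁ + p + (α₂ + r) = γ₁ + γ₂ := by rw [hr]; linarith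
      have := congrArg (Complex.ofReal) hre
      push_cast at this
      linear_combination this
    · rw [Matrix.det_fin_two]
      simp [Matrix.add_apply]
      have hre : (α₁ + p) * (α₂ + r) - q * q = γ₁ * γ₂ := by rw [hr]; linear_combination hDe
      have := congrArg (Complex.ofReal) hre
      push_cast at this
      linear_combination this

/-- Horn's problem for `n = 2`: sufficiency of the trace identity and triangle inequalities. -/
theorem horn_n2_sufficiency (α₁ α₂ β₁ β₂ γ₁ γ₂ : ℝ)
    (hα : α₂ ≤ α₁) (hβ : β₂ ≤ β₁) (hγ : γ₂ ≤ γ₁)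
    (htr : γ₁ + γ₂ = α₁ + α₂ + β₁ + β₂)
    (h1 : |(α₁ - α₂) - (β₁ - β₂)| ≤ γ₁ - γ₂)
    (h2 : γ₁ - γ₂ ≤ (α₁ - α₂) + (β₁ - β₂)) :
    ∃ (A B : Matrix (Fin 2) (Fin 2) ℂ) (hA : A.IsHermitian) (hB : B.IsHermitian),
      eigsEq hA ![α₁, α₂] ∧ eigsEq hB ![β₁, β₂] ∧ eigsEq (hA.add hB) ![γ₁, γ₂] := by
  obtain ⟨h1a, h1b⟩ := abs_le.mp h1
  rcases eq_or_lt_of_le hα with heq | hd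
  · -- α₁ = α₂ : take p = β₁, q = 0
    have e1 : γ₁ = α₁ + β₁ := by linarith
    have e2 : γ₂ = α₂ + β₂ := by linarith
    apply key α₁ α₂ β₁ β₂ γ₁ γ₂ β₁ 0
    · ring
    · rw [e1, e2, ← heq]; ring
    · exact htr
  · have hsq : (γ₁ + γ₂)^2 = (α₁ + α₂ + β₁ + β₂)^2 := by rw [htr]
    have hprod1 : 0 ≤ (γ₁ - γ₂ - ((α₁ - α₂) - (β₁ - β₂))) *
        (γ₁ - γ₂ + ((α₁ - α₂) - (β₁ - β₂))) := by
      apply mul_nonneg <;> linarith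
    have hprod2 : 0 ≤ ((α₁ - α₂) + (β₁ - β₂) - (γ₁ - γ₂)) *
        ((α₁ - α₂) + (β₁ - β₂) + (γ₁ - γ₂)) := by
      apply mul_nonneg <;> linarith
    have hnn1 : 0 ≤ (α₁ + β₂) * (α₂ + β₁) - γ₁ * γ₂ := by nlinarith [hprod1, hsq]
    have hnn2 : 0 ≤ γ₁ * γ₂ - (α₁ + β₁) * (α₂ + β₂) := by nlinarith [hprod2, hsq]
    set p : ℝ := (α₁*α₂ + α₁*β₁ + α₁*β₂ + β₁*β₂ - γ₁*γ₂) / (α₁ - α₂) with hpdef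
    have hd' : α₁ - α₂ ≠ 0 := by linarith
    have hpd : p * (α₁ - α₂) = α₁*α₂ + α₁*β₁ + α₁*β₂ + β₁*β₂ - γ₁*γ₂ := by
      rw [hpdef]; field_simp
    have heq2 : (p - β₂) * (α₁ - α₂) = (α₁ + β₂) * (α₂ + β₁) - γ₁ * γ₂ := by
      linear_combination hpd
    have heq3 : (β₁ - p) * (α₁ - α₂) = γ₁ * γ₂ - (α₁ + β₁) * (α₂ + β₂) := by
      linear_combination -hpd
    have hp1 : 0 ≤ p - β₂ := by
      by_contra hc; push_neg at hc
      nlinarith [mul_neg_of_neg_of_pos hc (by linarith : (0:ℝ) < α₁ - α₂)]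
    have hp2 : 0 ≤ β₁ - p := by
      by_contra hc; push_neg at hc
      nlinarith [mul_neg_of_neg_of_pos hc (by linarith : (0:ℝ) < α₁ - α₂)]
    set q : ℝ := Real.sqrt ((p - β₂) * (β₁ - p)) with hqdef
    have hq : q ^ 2 = (p - β₂) * (β₁ - p) := Real.sq_sqrt (mul_nonneg hp1 hp2)
    apply key α₁ α₂ β₁ β₂ γ₁ γ₂ p q
    · linear_combination -hq
    · linear_combination -hq - hpd
    · exact htr
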